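/- Let g : ℝⁿ → ℝ be a polynomial of degree at most d, and let γ(t) = Σ_{i ≤ D} a_i t^i (a_i ∈ ℝⁿ, finite Laurent-type expansion convergent for |t| > R) be a real meromorphic arc with lim_{t→∞} g(γ(t)) = L ∈ ℝ. Let γ̂(t) = Σ_{-(d-1)D ≤ i ≤ D} a_i t^i be the truncation of γ at order -(d-1)D. Then lim_{t→∞} g(γ̂(t)) = L as well. -/

import Mathlib

open Filter Topology MvPolynomial Set

noncomputable section

namespace TruncAux

open AddMonoidAlgebra Finsupp

abbrev Laur := AddMonoidAlgebra ℝ ℤ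

/-- all exponents of `p` are `≤ M` -/
def bd (M : ℤ) (p : Laur) : Prop := ∀ k ∈ p.coeff.support, k ≤ M

/-- all exponents of `p` are `< M` -/
def sbd (M : ℤ) (p : Laur) : Prop := ∀ k ∈ p.coeff.support, k < M

lemma bd_mul {a b : ℤ} {p q : Laur} (hp : bd a p) (hq : bd b q) : bd (a + b) (p * q) := by
  classical
  intro k hk
  obtain ⟨x, hx, y, hy, rfl⟩ := Finset.mem_add.mp (AddMonoidAlgebra.support_coeff_mul_subset p q hk)
  exact add_le_add (hp x hx) (hq y hy)

lemma sbd_mul_bd {a b : ℤ} {p q : Laur} (hp : sbd a p) (hq : bd b q) : sbd (a + b) (p * q) := by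
  classical
  intro k hk
  obtain ⟨x, hx, y, hy, rfl⟩ := Finset.mem_add.mp (AddMonoidAlgebra.support_coeff_mul_subset p q hk)
  exact add_lt_add_of_lt_of_le (hp x hx) (hq y hy)

lemma bd_mul_sbd {a b : ℤ} {p q : Laur} (hp : bd a p) (hq : sbd b q) : sbd (a + b) (p * q) := by
  classical
  intro k hk
  obtain ⟨x, hx, y, hy, rfl⟩ := Finset.mem_add.mp (AddMonoidAlgebra.support_coeff_mul_subset p q hk)
  exact add_lt_add_of_le_of_lt (hp x hx) (hq y hy)

lemma sbd_add {M : ℤ} {p q : Laur} (hp : sbd M p) (hq : sbd M q) : sbd M (p + q) := by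
  intro k hk
  rw [AddMonoidAlgebra.coeff_add] at hk
  rcases Finset.mem_union.mp (Finsupp.support_add hk) with h | h
  · exact hp k h
  · exact hq k h

lemma bd_add {M : ℤ} {p q : Laur} (hp : bd M p) (hq : bd M q) : bd M (p + q) := by
  intro k hk
  rw [AddMonoidAlgebra.coeff_add] at hk
  rcases Finset.mem_union.mp (Finsupp.support_add hk) with h | h
  · exact hp k h
  · exact hq k h

lemma sbd_mono {M M' : ℤ} {p : Laur} (hp : sbd M p) (h : M ≤ M') : sbd M' p :=
  fun k hk => lt_of_lt_of_le (hp k hk) h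

lemma bd_mono {M M' : ℤ} {p : Laur} (hp : bd M p) (h : M ≤ M') : bd M' p :=
  fun k hk => le_trans (hp k hk) h

lemma sbd_zero (M : ℤ) : sbd M (0 : Laur) := by
  intro k hk
  simp at hk

lemma bd_zero (M : ℤ) : bd M (0 : Laur) := by
  intro k hk
  simp at hk

lemma bd_one : bd 0 (1 : Laur) := by
  intro k hk
  have h1 : (1 : Laur) = AddMonoidAlgebra.single 0 1 := rfl
  rw [h1] at hk
  have := Finsupp.support_single_subset hk
  simp only [Finset.mem_singleton] at this
  simp [this]

lemma bd_single (k : ℤ) (a : ℝ) : bd k (AddMonoidAlgebra.single k a : Laur) := by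
  intro m hm
  have := Finsupp.support_single_subset hm
  simp only [Finset.mem_singleton] at this
  simp [this]

lemma bd_sum {ι : Type*} (u : Finset ι) (f : ι → Laur) {M : ℤ}
    (h : ∀ j ∈ u, bd M (f j)) : bd M (∑ j ∈ u, f j) := by
  classical
  induction u using Finset.induction with
  | empty => simpa using bd_zero M
  | insert _ _ hni ih =>
      rename_i a u'
      rw [Finset.sum_insert hni]
      exact bd_add (h a (Finset.mem_insert_self a u'))
        (ih fun j hj => h j (Finset.mem_insert_of_mem hj))

lemma sbd_sum {ι : Type*} (u : Finset ι) (f : ι → Laur) {M : ℤ}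
    (h : ∀ j ∈ u, sbd M (f j)) : sbd M (∑ j ∈ u, f j) := by
  classical
  induction u using Finset.induction with
  | empty => simpa using sbd_zero M
  | insert _ _ hni ih =>
      rename_i a u'
      rw [Finset.sum_insert hni]
      exact sbd_add (h a (Finset.mem_insert_self a u'))
        (ih fun j hj => h j (Finset.mem_insert_of_mem hj))

lemma bd_smul {M : ℤ} {p : Laur} (a : ℝ) (hp : bd M p) : bd M (a • p) := by
  intro k hk
  rw [AddMonoidAlgebra.coeff_smul] at hk
  exact hp k (Finsupp.support_smul hk)

lemma sbd_smul {M : ℤ} {p : Laur} (a : ℝ) (hp : sbd M p) : sbd M (a • p) := by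
  intro k hk
  rw [AddMonoidAlgebra.coeff_smul] at hk
  exact hp k (Finsupp.support_smul hk)

lemma bd_algebraMap (a : ℝ) : bd 0 (algebraMap ℝ Laur a) := by
  rw [Algebra.algebraMap_eq_smul_one]
  exact bd_smul a bd_one

lemma bd_pow {M : ℤ} {p : Laur} (hp : bd M p) (e : ℕ) : bd ((e : ℤ) * M) (p ^ e) := by
  induction e with
  | zero => simpa using bd_one
  | succ e ih =>
      rw [pow_succ]
      have h := bd_mul ih hp
      have he : (e : ℤ) * M + M = ((e + 1 : ℕ) : ℤ) * M := by push_cast; ring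
      rwa [he] at h

lemma sbd_pow_sub_pow {M c : ℤ} {p q : Laur} (hp : bd M p) (hq : bd M q)
    (hd : sbd c (p - q)) (e : ℕ) : sbd (c - M + (e : ℤ) * M) (p ^ e - q ^ e) := by
  induction e with
  | zero => simpa using sbd_zero _
  | succ e ih =>
      have key : p ^ (e + 1) - q ^ (e + 1)
          = (p - q) * p ^ e + q * (p ^ e - q ^ e) := by ring
      rw [key]
      have h1 : sbd (c + (e : ℤ) * M) ((p - q) * p ^ e) := sbd_mul_bd hd (bd_pow hp e)
      have h2 : sbd (M + (c - M + (e : ℤ) * M)) (q * (p ^ e - q ^ e)) := bd_mul_sbd hq ih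
      have e2 : M + (c - M + (e : ℤ) * M) = c + (e : ℤ) * M := by ring
      rw [e2] at h2
      have e3 : c - M + ((e + 1 : ℕ) : ℤ) * M = c + (e : ℤ) * M := by push_cast; ring
      rw [e3]
      exact sbd_add h1 h2

lemma bd_prod {ι : Type*} (u : Finset ι) (f : ι → Laur) (m : ι → ℤ)
    (hf : ∀ j ∈ u, bd (m j) (f j)) : bd (∑ j ∈ u, m j) (∏ j ∈ u, f j) := by
  classical
  induction u using Finset.induction with
  | empty => simpa using bd_one
  | insert _ _ hni ih =>
      rename_i a u'
      rw [Finset.prod_insert hni, Finset.sum_insert hni]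
      exact bd_mul (hf a (Finset.mem_insert_self a u'))
        (ih fun j hj => hf j (Finset.mem_insert_of_mem hj))

lemma sbd_prod_sub_prod {ι : Type*} (u : Finset ι) (f f' : ι → Laur) (m : ι → ℤ) (c : ℤ)
    (hf : ∀ j ∈ u, bd (m j) (f j)) (hf' : ∀ j ∈ u, bd (m j) (f' j))
    (hd : ∀ j ∈ u, sbd (c + m j) (f j - f' j)) :
    sbd (c + ∑ j ∈ u, m j) (∏ j ∈ u, f j - ∏ j ∈ u, f' j) := by
  classical
  induction u using Finset.induction with
  | empty => simpa using sbd_zero _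
  | insert _ _ hni ih =>
      rename_i a u'
      rw [Finset.prod_insert hni, Finset.prod_insert hni, Finset.sum_insert hni]
      have key : f a * ∏ j ∈ u', f j - f' a * ∏ j ∈ u', f' j
          = (f a - f' a) * ∏ j ∈ u', f j + f' a * (∏ j ∈ u', f j - ∏ j ∈ u', f' j) := by
        ring
      rw [key]
      have h1 : sbd (c + m a + ∑ j ∈ u', m j) ((f a - f' a) * ∏ j ∈ u', f j) :=
        sbd_mul_bd (hd a (Finset.mem_insert_self a u'))
          (bd_prod u' f m fun j hj => hf j (Finset.mem_insert_of_mem hj))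
      have h2 : sbd (m a + (c + ∑ j ∈ u', m j)) (f' a * (∏ j ∈ u', f j - ∏ j ∈ u', f' j)) :=
        bd_mul_sbd (hf' a (Finset.mem_insert_self a u'))
          (ih (fun j hj => hf j (Finset.mem_insert_of_mem hj))
              (fun j hj => hf' j (Finset.mem_insert_of_mem hj))
              (fun j hj => hd j (Finset.mem_insert_of_mem hj)))
      have e1 : c + m a + ∑ j ∈ u', m j = c + (m a + ∑ j ∈ u', m j) := by ring
      have e2 : m a + (c + ∑ j ∈ u', m j) = c + (m a + ∑ j ∈ u', m j) := by ring
      rw [e1] at h1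
      rw [e2] at h2
      exact sbd_add h1 h2

/-- evaluation of a Laurent "polynomial" at a nonzero real, as an algebra hom -/
def evA (t : ℝ) (ht : t ≠ 0) : Laur →ₐ[ℝ] ℝ :=
  AddMonoidAlgebra.lift ℝ ℝ ℤ ((Units.coeHom ℝ).comp (zpowersHom ℝˣ (Units.mk0 t ht)))

lemma evA_single (t : ℝ) (ht : t ≠ 0) (k : ℤ) (a : ℝ) :
    evA t ht (AddMonoidAlgebra.single k a) = a * t ^ k := by
  rw [evA, AddMonoidAlgebra.lift_single]
  simp only [MonoidHom.comp_apply, zpowersHom_apply, Units.coeHom_apply,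
    Units.val_zpow_eq_zpow_val, Units.val_mk0, smul_eq_mul]
  congr 1

lemma evA_eq_sum (t : ℝ) (ht : t ≠ 0) (p : Laur) :
    evA t ht p = ∑ k ∈ p.coeff.support, p.coeff k * t ^ k := by
  conv_lhs => rw [← AddMonoidAlgebra.sum_coeff_single p]
  rw [Finsupp.sum, map_sum]
  exact Finset.sum_congr rfl fun k _ => evA_single t ht k (p.coeff k)

end TruncAux

open TruncAux

/-- Truncation lemma (Jelonek–Kurdyka, Lemma 3.3): if `g` has degree `≤ d` and
`γ(t) = Σ_{i ≤ D} aᵢ tⁱ` is a finite Laurent arc with `g(γ(t)) → L` as `t → ∞`,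
then the truncation `γ̂` discarding all terms of order `< -(d-1)D` satisfies
`g(γ̂(t)) → L` as well. -/
theorem truncation_preserves_limit (n d D : ℕ) (hD : 0 < D)
    (g : MvPolynomial (Fin n) ℝ) (hg : g.totalDegree ≤ d)
    (s : Finset ℤ) (A : ℤ → EuclideanSpace ℝ (Fin n))
    (hs : ∀ i ∈ s, i ≤ (D : ℤ)) (L : ℝ)
    (hlim : Tendsto
      (fun t : ℝ => MvPolynomial.eval (fun j => (∑ i ∈ s, t ^ i • A i) j) g)
      atTop (𝓝 L)) :
    Tendsto
      (fun t : ℝ => MvPolynomial.eval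
        (fun j => (∑ i ∈ s.filter (fun i => -(((d : ℤ) - 1) * D) ≤ i), t ^ i • A i) j) g)
      atTop (𝓝 L) := by
  classical
  set B : ℤ := ((d : ℤ) - 1) * D with hB
  set s' : Finset ℤ := s.filter (fun i => -B ≤ i) with hs'
  -- the two arcs as Laurent polynomials
  set Φ : Fin n → Laur := fun j => ∑ i ∈ s, AddMonoidAlgebra.single i (A i j) with hΦ
  set Φ' : Fin n → Laur := fun j => ∑ i ∈ s', AddMonoidAlgebra.single i (A i j) with hΦ'
  -- degree bounds
  have hbdΦ : ∀ j, bd (D : ℤ) (Φ j) := by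
    intro j
    rw [hΦ]
    exact bd_sum s _ fun i hi => bd_mono (bd_single i (A i j)) (hs i hi)
  have hbdΦ' : ∀ j, bd (D : ℤ) (Φ' j) := by
    intro j
    rw [hΦ']
    exact bd_sum s' _ fun i hi =>
      bd_mono (bd_single i (A i j)) (hs i (Finset.mem_of_mem_filter i hi))
  have hdiff : ∀ j, sbd (-B) (Φ j - Φ' j) := by
    intro j
    have hsplit : Φ j - Φ' j
        = ∑ i ∈ s.filter (fun i => ¬ (-B ≤ i)), AddMonoidAlgebra.single i (A i j) := by
      simp only [hΦ, hΦ', hs']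
      rw [← Finset.sum_filter_add_sum_filter_not s (fun i => -B ≤ i)
        (fun i => (AddMonoidAlgebra.single i (A i j) : Laur))]
      ring
    rw [hsplit]
    refine sbd_sum _ _ fun i hi => ?_
    have hilt : i < -B := by
      have := (Finset.mem_filter.mp hi).2
      omega
    exact fun k hk => lt_of_le_of_lt (bd_single i (A i j) k hk) hilt
  -- the difference of the two substituted Laurent polynomials has only negative exponents
  set P : Laur := MvPolynomial.aeval Φ g with hP
  set P' : Laur := MvPolynomial.aeval Φ' g with hP'
  have hsbd : sbd 0 (P - P') := by
    have expand : ∀ Ψ : Fin n → Laur, MvPolynomial.aeval Ψ g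
        = ∑ v ∈ g.support, MvPolynomial.aeval Ψ (MvPolynomial.monomial v (g.coeff v)) := by
      intro Ψ
      conv_lhs => rw [g.as_sum]
      rw [map_sum]
    rw [hP, hP', expand Φ, expand Φ', ← Finset.sum_sub_distrib]
    refine sbd_sum _ _ fun v hv => ?_
    rw [MvPolynomial.aeval_monomial, MvPolynomial.aeval_monomial,
      Finsupp.prod_pow, Finsupp.prod_pow, ← mul_sub]
    have hprod : sbd ((-B - (D : ℤ)) + ∑ j, (v j : ℤ) * (D : ℤ))
        (∏ j, Φ j ^ v j - ∏ j, Φ' j ^ v j) := by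
      apply sbd_prod_sub_prod Finset.univ (fun j => Φ j ^ v j) (fun j => Φ' j ^ v j)
        (fun j => (v j : ℤ) * (D : ℤ)) (-B - (D : ℤ))
      · intro j _; exact bd_pow (hbdΦ j) (v j)
      · intro j _; exact bd_pow (hbdΦ' j) (v j)
      · intro j _
        have h := sbd_pow_sub_pow (hbdΦ j) (hbdΦ' j) (hdiff j) (v j)
        convert h using 1
    have hdeg : (∑ j, (v j : ℤ)) ≤ (d : ℤ) := by
      have h1 : (∑ j, v j) ≤ g.totalDegree := by
        have h2 := MvPolynomial.le_totalDegree hv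
        rwa [Finsupp.sum_fintype] at h2
        intro _; rfl
      exact_mod_cast le_trans h1 hg
    have hle : (-B - (D : ℤ)) + ∑ j, (v j : ℤ) * (D : ℤ) ≤ 0 := by
      have hsum : ∑ j, (v j : ℤ) * (D : ℤ) = (∑ j, (v j : ℤ)) * (D : ℤ) := by
        rw [Finset.sum_mul]
      rw [hsum, hB]
      nlinarith [hdeg, (Nat.cast_pos.mpr hD : (0:ℤ) < (D:ℤ))]
    have := bd_mul_sbd (bd_algebraMap (g.coeff v)) (sbd_mono hprod hle)
    simpa using this
  -- the correction term tends to zero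
  set S : ℝ → ℝ := fun t => ∑ k ∈ (P - P').coeff.support, (P - P').coeff k * t ^ k with hS
  have hS0 : Tendsto S atTop (𝓝 0) := by
    rw [hS]
    have h0 : Tendsto (fun t : ℝ => ∑ k ∈ (P - P').coeff.support, (P - P').coeff k * t ^ k) atTop
        (𝓝 (∑ k ∈ (P - P').coeff.support, 0)) := by
      apply tendsto_finset_sum
      intro k hk
      have hneg : k < 0 := hsbd k hk
      have := (tendsto_zpow_atTop_zero hneg).const_mul ((P - P').coeff k)
      simpa using this
    simpa using h0
  -- evaluation identities for t ≠ 0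
  have hev : ∀ t : ℝ, t ≠ 0 →
      MvPolynomial.eval (fun j => (∑ i ∈ s', t ^ i • A i) j) g
      = MvPolynomial.eval (fun j => (∑ i ∈ s, t ^ i • A i) j) g - S t := by
    intro t ht
    have hevP : ∀ (u : Finset ℤ),
        evA t ht (MvPolynomial.aeval (fun j => ∑ i ∈ u, AddMonoidAlgebra.single i (A i j)) g)
        = MvPolynomial.eval (fun j => (∑ i ∈ u, t ^ i • A i) j) g := by
      intro u
      rw [MvPolynomial.comp_aeval_apply]
      have harg : (fun j => evA t ht (∑ i ∈ u, AddMonoidAlgebra.single i (A i j)))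
          = fun j => (∑ i ∈ u, t ^ i • A i) j := by
        funext j
        rw [map_sum]
        have hap : (∑ i ∈ u, t ^ i • A i) j = ∑ i ∈ u, (t ^ i • A i) j :=
          by rw [WithLp.ofLp_sum, Finset.sum_apply]
        rw [hap]
        refine Finset.sum_congr rfl fun i _ => ?_
        rw [evA_single]
        simp [mul_comm]
      rw [harg]
      exact DFunLike.congr_fun (MvPolynomial.coe_aeval_eq_eval _) g
    have h1 : evA t ht P = MvPolynomial.eval (fun j => (∑ i ∈ s, t ^ i • A i) j) g := by
      rw [hP, hΦ]; exact hevP s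
    have h2 : evA t ht P' = MvPolynomial.eval (fun j => (∑ i ∈ s', t ^ i • A i) j) g := by
      rw [hP', hΦ']; exact hevP s'
    have h3 : evA t ht (P - P') = S t := by
      rw [evA_eq_sum, hS]
    rw [map_sub, h1, h2] at h3
    linarith
  -- conclude
  have heq : ∀ᶠ t : ℝ in atTop,
      MvPolynomial.eval (fun j => (∑ i ∈ s, t ^ i • A i) j) g - S t
      = MvPolynomial.eval (fun j => (∑ i ∈ s', t ^ i • A i) j) g := by
    filter_upwards [eventually_gt_atTop (0 : ℝ)] with t ht
    exact (hev t (ne_of_gt ht)).symm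
  have hfin := (hlim.sub hS0).congr' heq
  rw [sub_zero] at hfin
  exact hfin
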